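/- (Invariance of the symmetric discriminant under isomorphisms.) Let A, B, C, D ∈ K with AD − BC ≠ 0 and Cα_m + D ≠ 0 for all m, and set α'_m := (Aα_m + B)/(Cα_m + D) for m = 1, …, 2g+2. Then for all distinct indices i, j one has the exact equality (α'_i − α'_j)^{2g(2g+1)} · Δ(f') / ( f'_{new}(α'_i) · f'_{new}(α'_j) )^{2g+1} = (α_i − α_j)^{2g(2g+1)} · Δ(f) / ( f'(α_i) · f'(α_j) )^{2g+1}, where Δ(f') = ∏_{r<s}(α'_r − α'_s)². In particular the squared symmetric discriminants are invariant: (D'_{ij})² = (D_{ij})². -/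

import Mathlib

open Finset

/-- (Invariance of the symmetric discriminant under isomorphisms.) If
`α' m = (a·α m + b)/(c·α m + e)` is a common Möbius transformation (with `a·e − b·c ≠ 0`
and all denominators nonzero) of the roots, then for distinct `i, j` one has the exact
equality
`(α' i − α' j)^{2g(2g+1)}·Δ(f')/(f'ₙₑw(α' i)·f'ₙₑw(α' j))^{2g+1}
  = (α i − α j)^{2g(2g+1)}·Δ(f)/(f'(α i)·f'(α j))^{2g+1}`,
and in particular, for any symmetric ratios `p` (for the `α`'s) and `p'` (for the `α'`'s),
the squared symmetric discriminants are invariant: `(D'_{ij})² = (D_{ij})²`. -/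
private lemma erase_eq_union_filters {n : ℕ} (S : Finset (Fin n)) (r : Fin n) :
    S.erase r = S.filter (fun s => r < s) ∪ S.filter (fun s => s < r) := by
  ext s
  simp only [mem_erase, mem_filter, mem_union, ne_eq]
  constructor
  · rintro ⟨h1, h2⟩
    rcases lt_or_gt_of_ne h1 with h | h
    · exact Or.inr ⟨h2, h⟩
    · exact Or.inl ⟨h2, h⟩
  · rintro (⟨h2, h⟩ | ⟨h2, h⟩)
    · exact ⟨h.ne', h2⟩
    · exact ⟨h.ne, h2⟩

private lemma sq_prod_lt {M : Type*} [CommMonoid M] {n : ℕ} (S : Finset (Fin n))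
    (F : Fin n → Fin n → M) (hF : ∀ r s, F r s = F s r) :
    (∏ r ∈ S, ∏ s ∈ S.filter (fun s => r < s), F r s) ^ 2 =
      ∏ r ∈ S, ∏ s ∈ S.erase r, F r s := by
  have hsplit : ∏ r ∈ S, ∏ s ∈ S.erase r, F r s =
      (∏ r ∈ S, ∏ s ∈ S.filter (fun s => r < s), F r s) *
      (∏ r ∈ S, ∏ s ∈ S.filter (fun s => s < r), F r s) := by
    rw [← prod_mul_distrib]
    refine prod_congr rfl fun r hr => ?_
    rw [erase_eq_union_filters S r, prod_union ?_]
    rw [Finset.disjoint_left]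
    intro x hx hx'
    simp only [mem_filter] at hx hx'
    exact absurd (hx.2.trans hx'.2) (lt_irrefl r)
  have hswap : (∏ r ∈ S, ∏ s ∈ S.filter (fun s => s < r), F r s) =
      ∏ r ∈ S, ∏ s ∈ S.filter (fun s => r < s), F r s := by
    rw [Finset.prod_comm' (t' := S) (s' := fun s => S.filter (fun r => s < r))
      (fun r s => by simp only [mem_filter]; tauto)]
    exact prod_congr rfl fun s _ => prod_congr rfl fun r _ => hF _ _
  rw [sq, hsplit, hswap]

set_option maxHeartbeats 1600000 in
private lemma keyD (g' : ℕ) (K : Type*) [Field K]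
    (β : Fin (2*(g'+1)+2) → K) (hβ : Function.Injective β)
    (d : Fin (2*(g'+1)+2) → K)
    (hd : ∀ m, d m = ∏ n ∈ univ.erase m, (β m - β n))
    (Δ : K)
    (hΔ : Δ = ∏ r : Fin (2*(g'+1)+2), ∏ s ∈ univ.filter (fun s => r < s), (β r - β s) ^ 2)
    (i j : Fin (2*(g'+1)+2)) (hij : i ≠ j)
    (p : K) (hp : p ^ (4*(g'+1)) = (d j / d i) ^ 2)
    (ℓ : Fin (2*(g'+1)+2) → K)
    (hℓ : ∀ k, ℓ k = p * (β i - β k) / (β j - β k))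
    (D : K)
    (hD : D = (∏ k ∈ univ \ {i, j}, ℓ k) ^ 2 *
      ∏ k ∈ univ \ {i, j}, ∏ k' ∈ (univ \ {i, j}).filter (fun k' => k < k'),
        (ℓ k - ℓ k') ^ 2) :
    D ^ 2 * ((d i * d j) ^ (2*(g'+1)+1)) ^ 2 =
      ((β i - β j) ^ (2*(g'+1)*(2*(g'+1)+1)) * Δ) ^ 2 := by
  obtain ⟨x, hxdef⟩ : ∃ x : K, x = β i - β j := ⟨_, rfl⟩
  rw [← hxdef]
  set S : Finset (Fin (2*(g'+1)+2)) := univ \ {i, j} with hSdef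
  have hiS : i ∉ S := by simp [hSdef]
  have hjS : j ∉ S := by simp [hSdef]
  have hcard : S.card = 2*g'+2 := by
    rw [hSdef, card_sdiff_of_subset (by intro x _; exact mem_univ x)]
    rw [card_univ, Fintype.card_fin]
    rw [card_insert_of_notMem (by simp [hij]), card_singleton]
    omega
  have hx : x ≠ 0 := by rw [hxdef]; exact sub_ne_zero.mpr (hβ.ne hij)
  have hmem : ∀ k ∈ S, k ≠ i ∧ k ≠ j := by
    intro k hk
    simp only [hSdef, mem_sdiff, mem_insert, mem_singleton, not_or] at hk
    exact hk.2
  have hik : ∀ k ∈ S, β i - β k ≠ 0 := fun k hk =>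
    sub_ne_zero.mpr (hβ.ne ((hmem k hk).1.symm))
  have hjk : ∀ k ∈ S, β j - β k ≠ 0 := fun k hk =>
    sub_ne_zero.mpr (hβ.ne ((hmem k hk).2.symm))
  set Bi : K := ∏ k ∈ S, (β i - β k) with hBidef
  set Bj : K := ∏ k ∈ S, (β j - β k) with hBjdef
  set DS : K := ∏ k ∈ S, ∏ k' ∈ S.erase k, (β k - β k') ^ 2 with hDSdef
  have hBi : Bi ≠ 0 := prod_ne_zero_iff.mpr hik
  have hBj : Bj ≠ 0 := prod_ne_zero_iff.mpr hjk
  have huErase_i : (univ : Finset (Fin (2*(g'+1)+2))).erase i = insert j S := by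
    ext m
    simp only [mem_erase, mem_univ, and_true, mem_insert, hSdef, mem_sdiff,
      mem_singleton, not_or, true_and]
    constructor
    · intro h
      by_cases hmj : m = j
      · exact Or.inl hmj
      · exact Or.inr ⟨h, hmj⟩
    · rintro (h | h)
      · exact h ▸ (Ne.symm hij)
      · exact h.1
  have huErase_j : (univ : Finset (Fin (2*(g'+1)+2))).erase j = insert i S := by
    ext m
    simp only [mem_erase, mem_univ, and_true, mem_insert, hSdef, mem_sdiff,
      mem_singleton, not_or, true_and]
    constructor
    · intro h
      by_cases hmi : m = i
      · exact Or.inl hmi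
      · exact Or.inr ⟨hmi, h⟩
    · rintro (h | h)
      · exact h ▸ hij
      · exact h.2
  have hinotjS : i ∉ insert j S := by
    simp only [mem_insert, not_or]
    exact ⟨hij, hiS⟩
  have hdi : d i = x * Bi := by
    rw [hd i, huErase_i, prod_insert hjS, hBidef, ← hxdef]
  have hdj : d j = (β j - β i) * Bj := by
    rw [hd j, huErase_j, prod_insert hiS, hBjdef]
  have hdi0 : d i ≠ 0 := by rw [hdi]; exact mul_ne_zero hx hBi
  have hdj0 : d j ≠ 0 := by
    rw [hdj]
    refine mul_ne_zero (fun h => hx ?_) hBj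
    rw [hxdef]; linear_combination -h
  have f4 : (d i) ^ 2 = x ^ 2 * Bi ^ 2 := by rw [hdi]; ring
  have f5 : (d j) ^ 2 = x ^ 2 * Bj ^ 2 := by rw [hdj, hxdef]; ring
  have f6 : p ^ (4*(g'+1)) = Bj ^ 2 / Bi ^ 2 := by
    rw [eq_div_iff (pow_ne_zero 2 hBi)]
    have h := hp
    rw [div_pow, eq_div_iff (pow_ne_zero 2 hdi0)] at h
    rw [f4, f5] at h
    apply mul_left_cancel₀ (pow_ne_zero 2 hx)
    linear_combination h
  have F1 : ∏ k ∈ S, ℓ k = p ^ (2*g'+2) * Bi / Bj := by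
    rw [show ∏ k ∈ S, ℓ k = ∏ k ∈ S, (p * (β i - β k) / (β j - β k)) from
      prod_congr rfl fun k _ => hℓ k]
    rw [prod_div_distrib, prod_mul_distrib, prod_const, hcard, hBidef, hBjdef]
  have f2L : (∏ k ∈ S, ∏ k' ∈ S.filter (fun k' => k < k'), (ℓ k - ℓ k') ^ 2) ^ 2 =
      ∏ k ∈ S, ∏ k' ∈ S.erase k, (ℓ k - ℓ k') ^ 2 :=
    sq_prod_lt S (fun k k' => (ℓ k - ℓ k') ^ 2) (fun r s => by ring)
  have hcarderase : ∀ k ∈ S, (S.erase k).card = 2*g'+1 := by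
    intro k hk
    rw [card_erase_of_mem hk, hcard]
    omega
  obtain ⟨C, hCdef⟩ : ∃ C : K, C = p ^ 2 * x ^ 2 := ⟨_, rfl⟩
  have hpt : ∀ k ∈ S, ∀ k' ∈ S.erase k, (ℓ k - ℓ k') ^ 2 =
      C * (β k - β k') ^ 2 /
        ((β j - β k) ^ 2 * (β j - β k') ^ 2) := by
    intro k hk k' hk'
    have h1 := hjk k hk
    have h2 := hjk k' (mem_of_mem_erase hk')
    rw [hℓ k, hℓ k', hCdef, hxdef]
    field_simp
    ring
  have hC : ∏ k ∈ S, ∏ _k' ∈ S.erase k, C = (C ^ (2*g'+1)) ^ (2*g'+2) := by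
    rw [show ∏ k ∈ S, ∏ _k' ∈ S.erase k, C = ∏ k ∈ S, C ^ (2*g'+1) from
      prod_congr rfl fun k hk => by rw [prod_const, hcarderase k hk]]
    rw [prod_const, hcard]
  have hU1 : ∏ k ∈ S, ∏ _k' ∈ S.erase k, (β j - β k) ^ 2 = (Bj ^ 2) ^ (2*g'+1) := by
    calc ∏ k ∈ S, ∏ _k' ∈ S.erase k, (β j - β k) ^ 2
        = ∏ k ∈ S, ((β j - β k) ^ 2) ^ (2*g'+1) :=
          prod_congr rfl fun k hk => by rw [prod_const, hcarderase k hk]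
      _ = (∏ k ∈ S, (β j - β k) ^ 2) ^ (2*g'+1) :=
          prod_pow S (2*g'+1) (fun k => (β j - β k) ^ 2)
      _ = (Bj ^ 2) ^ (2*g'+1) := by
          rw [prod_pow S 2 (fun k => β j - β k), hBjdef]
  have hBj2 : ∏ k ∈ S, (β j - β k) ^ 2 = Bj ^ 2 := by
    rw [prod_pow S 2 (fun k => β j - β k), hBjdef]
  have hU2 : ∏ k ∈ S, ∏ k' ∈ S.erase k, (β j - β k') ^ 2 = (Bj ^ 2) ^ (2*g'+1) := by
    apply mul_left_cancel₀ (pow_ne_zero 2 hBj)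
    have hstep : ∀ k ∈ S, (β j - β k) ^ 2 * ∏ k' ∈ S.erase k, (β j - β k') ^ 2
        = Bj ^ 2 := by
      intro k hk
      rw [← hBj2]
      exact mul_prod_erase S (fun k' => (β j - β k') ^ 2) hk
    calc Bj ^ 2 * ∏ k ∈ S, ∏ k' ∈ S.erase k, (β j - β k') ^ 2
        = ∏ k ∈ S, ((β j - β k) ^ 2 * ∏ k' ∈ S.erase k, (β j - β k') ^ 2) := by
          rw [prod_mul_distrib, hBj2]
      _ = ∏ _k ∈ S, Bj ^ 2 := prod_congr rfl hstep
      _ = (Bj ^ 2) ^ (2*g'+2) := by rw [prod_const, hcard]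
      _ = Bj ^ 2 * (Bj ^ 2) ^ (2*g'+1) := by ring
  have hP2 : ∏ k ∈ S, ∏ k' ∈ S.erase k, (ℓ k - ℓ k') ^ 2 =
      (C ^ (2*g'+1)) ^ (2*g'+2) * DS /
        ((Bj ^ 2) ^ (2*g'+1) * (Bj ^ 2) ^ (2*g'+1)) := by
    rw [show ∏ k ∈ S, ∏ k' ∈ S.erase k, (ℓ k - ℓ k') ^ 2 =
        ∏ k ∈ S, ∏ k' ∈ S.erase k,
          (C * (β k - β k') ^ 2 /
            ((β j - β k) ^ 2 * (β j - β k') ^ 2)) from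
      prod_congr rfl fun k hk => prod_congr rfl fun k' hk' => hpt k hk k' hk']
    simp only [prod_div_distrib, prod_mul_distrib]
    rw [hC, hU1, hU2, ← hDSdef]
  have hDelta2 : Δ ^ 2 = (d i) ^ 2 * (d j) ^ 2 * Bi ^ 2 * Bj ^ 2 * DS := by
    have hsq : Δ ^ 2 = ∏ r : Fin (2*(g'+1)+2), ∏ s ∈ univ.erase r, (β r - β s) ^ 2 := by
      rw [hΔ]
      exact sq_prod_lt univ (fun r s => (β r - β s) ^ 2) (fun r s => by ring)
    have huniv : (univ : Finset (Fin (2*(g'+1)+2))) = insert i (insert j S) := by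
      ext m
      simp only [mem_univ, mem_insert, hSdef, mem_sdiff, mem_singleton, not_or,
        true_iff, true_and]
      by_cases h1 : m = i
      · exact Or.inl h1
      by_cases h2 : m = j
      · exact Or.inr (Or.inl h2)
      exact Or.inr (Or.inr ⟨h1, h2⟩)
    have hterm_i : ∏ s ∈ univ.erase i, (β i - β s) ^ 2 = (d i) ^ 2 := by
      rw [prod_pow, ← hd i]
    have hterm_j : ∏ s ∈ univ.erase j, (β j - β s) ^ 2 = (d j) ^ 2 := by
      rw [prod_pow, ← hd j]
    have hterm_k : ∀ k ∈ S, ∏ s ∈ univ.erase k, (β k - β s) ^ 2 =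
        (β k - β i) ^ 2 * ((β k - β j) ^ 2 * ∏ k' ∈ S.erase k, (β k - β k') ^ 2) := by
      intro k hk
      obtain ⟨hki, hkj⟩ := hmem k hk
      have her : (univ : Finset (Fin (2*(g'+1)+2))).erase k =
          insert i (insert j (S.erase k)) := by
        ext m
        simp only [mem_erase, mem_univ, and_true, mem_insert, hSdef, mem_sdiff,
          mem_singleton, not_or, true_and]
        constructor
        · intro h
          by_cases h1 : m = i
          · exact Or.inl h1
          by_cases h2 : m = j
          · exact Or.inr (Or.inl h2)
          · exact Or.inr (Or.inr ⟨h, h1, h2⟩)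
        · rintro (h1 | h2 | h3)
          · exact h1 ▸ (Ne.symm hki)
          · exact h2 ▸ (Ne.symm hkj)
          · exact h3.1
      have hi' : i ∉ insert j (S.erase k) := by
        simp only [mem_insert, not_or]
        exact ⟨hij, fun h => hiS (mem_of_mem_erase h)⟩
      have hj' : j ∉ S.erase k := fun h => hjS (mem_of_mem_erase h)
      rw [her, prod_insert hi', prod_insert hj']
    rw [hsq]
    rw [prod_congr huniv (fun r _ => rfl), prod_insert hinotjS, prod_insert hjS,
      hterm_i, hterm_j, prod_congr rfl hterm_k]
    simp only [prod_mul_distrib]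
    have hki2 : ∏ k ∈ S, (β k - β i) ^ 2 = Bi ^ 2 := by
      rw [show ∏ k ∈ S, (β k - β i) ^ 2 = ∏ k ∈ S, (β i - β k) ^ 2 from
        prod_congr rfl fun k _ => by ring]
      rw [prod_pow S 2 (fun k => β i - β k), hBidef]
    have hkj2 : ∏ k ∈ S, (β k - β j) ^ 2 = Bj ^ 2 := by
      rw [show ∏ k ∈ S, (β k - β j) ^ 2 = ∏ k ∈ S, (β j - β k) ^ 2 from
        prod_congr rfl fun k _ => by ring]
      rw [prod_pow S 2 (fun k => β j - β k), hBjdef]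
    rw [hki2, hkj2, ← hDSdef]
    ring
  have hD2 : D ^ 2 = (p ^ (4*(g'+1))) ^ (2*(g'+1)+1) *
      ((Bi ^ 2) ^ 2 * (x ^ 2) ^ ((2*g'+1)*(2*g'+2)) * DS) /
      ((Bj ^ 2) ^ 2 * ((Bj ^ 2) ^ (2*g'+1) * (Bj ^ 2) ^ (2*g'+1))) := by
    rw [hD, mul_pow, f2L, hP2, F1, hCdef]
    field_simp
    ring
  rw [f6] at hD2
  have hrw : ((d i * d j) ^ (2*(g'+1)+1)) ^ 2 =
      ((d i) ^ 2) ^ (2*(g'+1)+1) * ((d j) ^ 2) ^ (2*(g'+1)+1) := by ring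
  rw [hD2, hrw, mul_pow (x ^ (2*(g'+1)*(2*(g'+1)+1))) Δ, hDelta2, f4, f5]
  field_simp [hBi, hBj]
  ring_nf
  field_simp
  rw [← mul_pow, mul_one_div_cancel hBi, one_pow, one_mul]

set_option maxHeartbeats 1600000 in
theorem symmetric_discriminant_moebius_invariance
    (g : ℕ) (hg : 1 ≤ g) (K : Type*) [Field K]
    (α : Fin (2*g+2) → K) (hα : Function.Injective α)
    (a b c e : K) (hdet : a*e - b*c ≠ 0) (hden : ∀ m, c * α m + e ≠ 0)
    (α' : Fin (2*g+2) → K)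
    (hα' : ∀ m, α' m = (a * α m + b) / (c * α m + e))
    (d : Fin (2*g+2) → K)
    (hd : ∀ m, d m = ∏ n ∈ univ.erase m, (α m - α n))
    (d' : Fin (2*g+2) → K)
    (hd' : ∀ m, d' m = ∏ n ∈ univ.erase m, (α' m - α' n))
    (Δ : K)
    (hΔ : Δ = ∏ r : Fin (2*g+2), ∏ s ∈ univ.filter (fun s => r < s), (α r - α s) ^ 2)
    (Δ' : K)
    (hΔ' : Δ' = ∏ r : Fin (2*g+2), ∏ s ∈ univ.filter (fun s => r < s), (α' r - α' s) ^ 2)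
    (i j : Fin (2*g+2)) (hij : i ≠ j)
    (p : K) (hp : p ^ (4*g) = (d j / d i) ^ 2)
    (ℓ : Fin (2*g+2) → K)
    (hℓ : ∀ k, ℓ k = p * (α i - α k) / (α j - α k))
    (p' : K) (hp' : p' ^ (4*g) = (d' j / d' i) ^ 2)
    (ℓ' : Fin (2*g+2) → K)
    (hℓ' : ∀ k, ℓ' k = p' * (α' i - α' k) / (α' j - α' k))
    (D : K)
    (hD : D = (∏ k ∈ univ \ {i, j}, ℓ k) ^ 2 *
      ∏ k ∈ univ \ {i, j}, ∏ k' ∈ (univ \ {i, j}).filter (fun k' => k < k'),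
        (ℓ k - ℓ k') ^ 2)
    (D' : K)
    (hD' : D' = (∏ k ∈ univ \ {i, j}, ℓ' k) ^ 2 *
      ∏ k ∈ univ \ {i, j}, ∏ k' ∈ (univ \ {i, j}).filter (fun k' => k < k'),
        (ℓ' k - ℓ' k') ^ 2) :
    (α' i - α' j) ^ (2*g*(2*g+1)) * Δ' / (d' i * d' j) ^ (2*g+1) =
      (α i - α j) ^ (2*g*(2*g+1)) * Δ / (d i * d j) ^ (2*g+1) ∧
    D' ^ 2 = D ^ 2 := by
  obtain ⟨g', rfl⟩ : ∃ g', g = g' + 1 := ⟨g - 1, by omega⟩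
  obtain ⟨δ, hδdef⟩ : ∃ δ : K, δ = a*e - b*c := ⟨_, rfl⟩
  have hδ0 : δ ≠ 0 := hδdef ▸ hdet
  have hsub : ∀ r s, α' r - α' s = δ * (α r - α s) / ((c*α r+e) * (c*α s+e)) := by
    intro r s
    rw [hα' r, hα' s, hδdef]
    rw [div_sub_div _ _ (hden r) (hden s)]
    congr 1
    ring
  have hα'inj : Function.Injective α' := by
    intro r s hrs
    apply hα
    have h := hsub r s
    rw [hrs, sub_self] at h
    have h2 := (div_eq_zero_iff.mp h.symm).resolve_right
      (mul_ne_zero (hden r) (hden s))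
    have h3 := (mul_eq_zero.mp h2).resolve_left hδ0
    exact sub_eq_zero.mp h3
  have hd0 : ∀ m, d m ≠ 0 := by
    intro m
    rw [hd m]
    exact prod_ne_zero_iff.mpr fun n hn =>
      sub_ne_zero.mpr (hα.ne (Ne.symm (mem_erase.mp hn).1))
  have hd'0 : ∀ m, d' m ≠ 0 := by
    intro m
    rw [hd' m]
    exact prod_ne_zero_iff.mpr fun n hn =>
      sub_ne_zero.mpr (hα'inj.ne (Ne.symm (mem_erase.mp hn).1))
  set Q : K := ∏ m : Fin (2*(g'+1)+2), (c * α m + e) with hQdef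
  have hQ : Q ≠ 0 := prod_ne_zero_iff.mpr fun m _ => hden m
  have hcerase : ∀ m : Fin (2*(g'+1)+2),
      ((univ : Finset (Fin (2*(g'+1)+2))).erase m).card = 2*(g'+1)+1 := by
    intro m
    rw [card_erase_of_mem (mem_univ m), card_univ, Fintype.card_fin]
    omega
  have hd'div : ∀ m, d' m = δ^(2*(g'+1)+1) * d m / ((c*α m+e)^(2*(g'+1)) * Q) := by
    intro m
    have hQm : (c*α m+e) * ∏ n ∈ univ.erase m, (c*α n+e) = Q :=
      mul_prod_erase univ (fun n => c*α n+e) (mem_univ m)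
    rw [hd' m]
    rw [show ∏ n ∈ univ.erase m, (α' m - α' n) =
        ∏ n ∈ univ.erase m, (δ * (α m - α n) / ((c*α m+e) * (c*α n+e))) from
      prod_congr rfl fun n _ => hsub m n]
    rw [prod_div_distrib, prod_mul_distrib, prod_mul_distrib, prod_const, prod_const,
      hcerase m, ← hd m]
    congr 1
    rw [← hQm]
    ring
  -- transformation of the discriminant
  have hAδ : ∏ r : Fin (2*(g'+1)+2), ∏ s ∈ univ.filter (fun s => r < s), δ^2 =
      (δ^(2*(g'+1)+1))^(2*(g'+1)+2) := by
    have h1 : ∏ r : Fin (2*(g'+1)+2), ∏ s ∈ univ.filter (fun s => r < s), δ^2 =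
        (∏ r : Fin (2*(g'+1)+2), ∏ s ∈ univ.filter (fun s => r < s), δ)^2 := by
      simp only [prod_pow]
    rw [h1, sq_prod_lt univ (fun _ _ => δ) (fun _ _ => rfl)]
    rw [show (∏ r : Fin (2*(g'+1)+2), ∏ _s ∈ univ.erase r, δ) =
        ∏ _r : Fin (2*(g'+1)+2), δ^(2*(g'+1)+1) from
      prod_congr rfl fun r _ => by rw [prod_const, hcerase r]]
    rw [prod_const, card_univ, Fintype.card_fin]
  have hAq : ∏ r : Fin (2*(g'+1)+2), ∏ s ∈ univ.filter (fun s => r < s),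
      ((c*α r+e) * (c*α s+e))^2 = Q^(2*(g'+1)+1) * Q^(2*(g'+1)+1) := by
    have h1 : ∏ r : Fin (2*(g'+1)+2), ∏ s ∈ univ.filter (fun s => r < s),
        ((c*α r+e) * (c*α s+e))^2 =
        (∏ r : Fin (2*(g'+1)+2), ∏ s ∈ univ.filter (fun s => r < s),
          ((c*α r+e) * (c*α s+e)))^2 := by
      simp only [prod_pow]
    rw [h1, sq_prod_lt univ (fun r s => (c*α r+e) * (c*α s+e))
      (fun r s => mul_comm _ _)]
    have hU : ∏ r : Fin (2*(g'+1)+2), ∏ s ∈ univ.erase r, (c*α s+e) =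
        Q^(2*(g'+1)+1) := by
      apply mul_left_cancel₀ hQ
      calc Q * ∏ r : Fin (2*(g'+1)+2), ∏ s ∈ univ.erase r, (c*α s+e)
          = ∏ r : Fin (2*(g'+1)+2), ((c*α r+e) * ∏ s ∈ univ.erase r, (c*α s+e)) := by
            rw [prod_mul_distrib, ← hQdef]
        _ = ∏ _r : Fin (2*(g'+1)+2), Q :=
            prod_congr rfl fun r _ => mul_prod_erase univ (fun n => c*α n+e) (mem_univ r)
        _ = Q^(2*(g'+1)+2) := by rw [prod_const, card_univ, Fintype.card_fin]
        _ = Q * Q^(2*(g'+1)+1) := by ring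
    calc ∏ r : Fin (2*(g'+1)+2), ∏ s ∈ univ.erase r, ((c*α r+e) * (c*α s+e))
        = ∏ r : Fin (2*(g'+1)+2),
            ((c*α r+e)^(2*(g'+1)+1) * ∏ s ∈ univ.erase r, (c*α s+e)) := by
          refine prod_congr rfl fun r _ => ?_
          rw [prod_mul_distrib, prod_const, hcerase r]
      _ = (∏ r : Fin (2*(g'+1)+2), (c*α r+e)^(2*(g'+1)+1)) *
            ∏ r : Fin (2*(g'+1)+2), ∏ s ∈ univ.erase r, (c*α s+e) := prod_mul_distrib
      _ = Q^(2*(g'+1)+1) * Q^(2*(g'+1)+1) := by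
          rw [hU, prod_pow, ← hQdef]
  have hΔ'div : Δ' = (δ^(2*(g'+1)+1))^(2*(g'+1)+2) * Δ /
      (Q^(2*(g'+1)+1) * Q^(2*(g'+1)+1)) := by
    rw [hΔ']
    rw [show (∏ r : Fin (2*(g'+1)+2), ∏ s ∈ univ.filter (fun s => r < s),
        (α' r - α' s)^2) =
        ∏ r : Fin (2*(g'+1)+2), ∏ s ∈ univ.filter (fun s => r < s),
          (δ^2 * (α r - α s)^2 / ((c*α r+e) * (c*α s+e))^2) from
      prod_congr rfl fun r _ => prod_congr rfl fun s _ => by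
        rw [hsub r s, div_pow, mul_pow]]
    simp only [prod_div_distrib, prod_mul_distrib]
    rw [hAδ, hAq, ← hΔ]
  -- part 1
  have part1 : (α' i - α' j) ^ (2*(g'+1)*(2*(g'+1)+1)) * Δ' /
      (d' i * d' j) ^ (2*(g'+1)+1) =
      (α i - α j) ^ (2*(g'+1)*(2*(g'+1)+1)) * Δ / (d i * d j) ^ (2*(g'+1)+1) := by
    obtain ⟨u, hu⟩ : ∃ u : K, u = c*α i+e := ⟨_, rfl⟩
    obtain ⟨v, hv⟩ : ∃ v : K, v = c*α j+e := ⟨_, rfl⟩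
    obtain ⟨y, hy⟩ : ∃ y : K, y = α i - α j := ⟨_, rfl⟩
    have hu0 : u ≠ 0 := hu ▸ hden i
    have hv0 : v ≠ 0 := hv ▸ hden j
    have hsubij : α' i - α' j = δ * y / (u * v) := by rw [hsub i j, hu, hv, hy]
    have hdi' : d' i = δ^(2*(g'+1)+1) * d i / (u^(2*(g'+1)) * Q) := by
      rw [hd'div i, hu]
    have hdj' : d' j = δ^(2*(g'+1)+1) * d j / (v^(2*(g'+1)) * Q) := by
      rw [hd'div j, hv]
    rw [← hy, div_eq_div_iff
      (pow_ne_zero _ (mul_ne_zero (hd'0 i) (hd'0 j)))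
      (pow_ne_zero _ (mul_ne_zero (hd0 i) (hd0 j)))]
    rw [hsubij, hΔ'div, hdi', hdj']
    field_simp [hu0, hv0, hQ]
    ring_nf
    simp only [inv_pow]
    field_simp
  refine ⟨part1, ?_⟩
  -- part 2
  have k1 := keyD g' K α hα d hd Δ hΔ i j hij p hp ℓ hℓ D hD
  have k2 := keyD g' K α' hα'inj d' hd' Δ' hΔ' i j hij p' hp' ℓ' hℓ' D' hD'
  have hY : (d i * d j)^(2*(g'+1)+1) ≠ 0 :=
    pow_ne_zero _ (mul_ne_zero (hd0 i) (hd0 j))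
  have hY' : (d' i * d' j)^(2*(g'+1)+1) ≠ 0 :=
    pow_ne_zero _ (mul_ne_zero (hd'0 i) (hd'0 j))
  have e1 : D^2 = ((α i - α j)^(2*(g'+1)*(2*(g'+1)+1)) * Δ /
      (d i * d j)^(2*(g'+1)+1))^2 := by
    rw [div_pow, eq_div_iff (pow_ne_zero 2 hY)]
    exact k1
  have e2 : D'^2 = ((α' i - α' j)^(2*(g'+1)*(2*(g'+1)+1)) * Δ' /
      (d' i * d' j)^(2*(g'+1)+1))^2 := by
    rw [div_pow, eq_div_iff (pow_ne_zero 2 hY')]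
    exact k2
  rw [e1, e2, part1]
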